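/- arXiv:2605.19039 — 4 statements merged into one kernel-verified Lean document; each statement's English description precedes it below -/
import Mathlib

section
/- Let I ⊆ ℝ be an open interval and let g : ℝ → ℝ² be twice continuously differentiable on I with g'(ξ) ≠ 0 for all ξ ∈ I. Then for every η ∈ ℝ and ξ ∈ I, the map P(η,ξ) = g(ξ) + η n(ξ) is differentiable at (η,ξ), its partial derivatives are ∂P/∂η = n(ξ) and ∂P/∂ξ = ‖g'(ξ)‖(1 + ηκ(ξ)) τ(ξ), and the determinant of the 2×2 matrix with columns ∂P/∂η and ∂P/∂ξ equals ‖g'(ξ)‖(1 + ηκ(ξ)). -/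
open Real Set

/-- The speed `‖g'(ξ)‖` (Euclidean norm of the derivative) of a planar curve. -/
noncomputable def speed (g : ℝ → ℝ × ℝ) (ξ : ℝ) : ℝ :=
  Real.sqrt ((deriv g ξ).1 ^ 2 + (deriv g ξ).2 ^ 2)

/-- The unit tangent vector `τ(ξ) = g'(ξ)/‖g'(ξ)‖`. -/
noncomputable def unitTangent (g : ℝ → ℝ × ℝ) (ξ : ℝ) : ℝ × ℝ :=
  ((deriv g ξ).1 / speed g ξ, (deriv g ξ).2 / speed g ξ)

/-- The unit normal vector `n(ξ) = (τ₂(ξ), -τ₁(ξ))`. -/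
noncomputable def unitNormal (g : ℝ → ℝ × ℝ) (ξ : ℝ) : ℝ × ℝ :=
  ((unitTangent g ξ).2, -(unitTangent g ξ).1)

/-- The signed curvature `κ(ξ) = (g₁'(ξ)g₂''(ξ) - g₂'(ξ)g₁''(ξ))/‖g'(ξ)‖³`. -/
noncomputable def signedCurvature (g : ℝ → ℝ × ℝ) (ξ : ℝ) : ℝ :=
  ((deriv g ξ).1 * (deriv (deriv g) ξ).2 - (deriv g ξ).2 * (deriv (deriv g) ξ).1) /
    speed g ξ ^ 3


/-- The Frenet (tubular) map `P(η,ξ) = g(ξ) + η n(ξ)`, with argument `p = (η, ξ)`. -/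
noncomputable def frenetMap (g : ℝ → ℝ × ℝ) (p : ℝ × ℝ) : ℝ × ℝ :=
  g p.2 + p.1 • unitNormal g p.2

private lemma alg1 (A B A' B' s η : ℝ) (hs : s ≠ 0) (h2 : s ^ 2 = A ^ 2 + B ^ 2) :
    s * (1 + η * ((A * B' - B * A') / s ^ 3)) * (A / s)
      = A + η * ((B' * s - B * ((A * A' + B * B') / s)) / s ^ 2) := by
  field_simp
  linear_combination (-η * B') * h2

private lemma alg2 (A B A' B' s η : ℝ) (hs : s ≠ 0) (h2 : s ^ 2 = A ^ 2 + B ^ 2) :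
    s * (1 + η * ((A * B' - B * A') / s ^ 3)) * (B / s)
      = B + η * (-((A' * s - A * ((A * A' + B * B') / s)) / s ^ 2)) := by
  field_simp
  linear_combination (η * A') * h2

private lemma alg3 (A B c s : ℝ) (hs : s ≠ 0) (h2 : s ^ 2 = A ^ 2 + B ^ 2) :
    (B / s) * (c * (B / s)) - c * (A / s) * (-(A / s)) = c := by
  field_simp
  linear_combination (-c) * h2

/-- For `g` C² on an open interval with `g' ≠ 0`, the Frenet map `P(η,ξ) = g(ξ) + η n(ξ)`
is differentiable at every `(η,ξ)` with `ξ` in the interval, its partial derivatives are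
`∂P/∂η = n(ξ)` and `∂P/∂ξ = ‖g'(ξ)‖(1 + ηκ(ξ)) τ(ξ)`, and the determinant of the 2×2
matrix whose columns are these partial derivatives equals `‖g'(ξ)‖(1 + ηκ(ξ))`. -/
theorem frenetMap_partials_det (a b : ℝ) (g : ℝ → ℝ × ℝ)
    (hg : ContDiffOn ℝ 2 g (Ioo a b))
    (hg' : ∀ ξ ∈ Ioo a b, deriv g ξ ≠ 0) :
    ∀ (η : ℝ), ∀ ξ ∈ Ioo a b,
      DifferentiableAt ℝ (frenetMap g) (η, ξ) ∧
      HasDerivAt (fun t => frenetMap g (t, ξ)) (unitNormal g ξ) η ∧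
      HasDerivAt (fun t => frenetMap g (η, t))
        ((speed g ξ * (1 + η * signedCurvature g ξ)) • unitTangent g ξ) ξ ∧
      Matrix.det
        !![(unitNormal g ξ).1, speed g ξ * (1 + η * signedCurvature g ξ) * (unitTangent g ξ).1;
           (unitNormal g ξ).2, speed g ξ * (1 + η * signedCurvature g ξ) * (unitTangent g ξ).2]
        = speed g ξ * (1 + η * signedCurvature g ξ) := by
  intro η ξ hξ
  have hopen : IsOpen (Ioo a b) := isOpen_Ioo
  have hmem := hopen.mem_nhds hξ
  have hgd : DifferentiableAt ℝ g ξ :=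
    (hg.contDiffAt hmem).differentiableAt two_ne_zero
  have hg'd : DifferentiableAt ℝ (deriv g) ξ :=
    ((hg.deriv_of_isOpen (m := 1) hopen (by norm_num)).contDiffAt hmem).differentiableAt one_ne_zero
  have hne := hg' ξ hξ
  -- component derivatives
  have hg1 : HasDerivAt (fun t => (g t).1) (deriv g ξ).1 ξ :=
    (ContinuousLinearMap.fst ℝ ℝ ℝ).hasFDerivAt.comp_hasDerivAt ξ hgd.hasDerivAt
  have hg2 : HasDerivAt (fun t => (g t).2) (deriv g ξ).2 ξ :=
    (ContinuousLinearMap.snd ℝ ℝ ℝ).hasFDerivAt.comp_hasDerivAt ξ hgd.hasDerivAt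
  have hA : HasDerivAt (fun t => (deriv g t).1) (deriv (deriv g) ξ).1 ξ :=
    (ContinuousLinearMap.fst ℝ ℝ ℝ).hasFDerivAt.comp_hasDerivAt ξ hg'd.hasDerivAt
  have hB : HasDerivAt (fun t => (deriv g t).2) (deriv (deriv g) ξ).2 ξ :=
    (ContinuousLinearMap.snd ℝ ℝ ℝ).hasFDerivAt.comp_hasDerivAt ξ hg'd.hasDerivAt
  have h0 : (0:ℝ) < (deriv g ξ).1 ^ 2 + (deriv g ξ).2 ^ 2 := by
    rcases eq_or_ne (deriv g ξ).1 0 with h1 | h1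
    · have h2 : (deriv g ξ).2 ≠ 0 := fun h2 => hne (Prod.ext h1 h2)
      positivity
    · positivity
  have hspos : 0 < speed g ξ := Real.sqrt_pos.mpr h0
  have hsne : speed g ξ ≠ 0 := hspos.ne'
  have hs2 : speed g ξ ^ 2 = (deriv g ξ).1 ^ 2 + (deriv g ξ).2 ^ 2 := Real.sq_sqrt h0.le
  -- derivative of the speed
  have hS : HasDerivAt (speed g)
      (((deriv g ξ).1 * (deriv (deriv g) ξ).1 + (deriv g ξ).2 * (deriv (deriv g) ξ).2)
        / speed g ξ) ξ := by
    have h : HasDerivAt (speed g)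
        (((2:ℕ) * (deriv g ξ).1 ^ (2-1) * (deriv (deriv g) ξ).1 +
          (2:ℕ) * (deriv g ξ).2 ^ (2-1) * (deriv (deriv g) ξ).2)
          / (2 * Real.sqrt ((deriv g ξ).1 ^ 2 + (deriv g ξ).2 ^ 2))) ξ :=
      ((hA.pow 2).add (hB.pow 2)).sqrt h0.ne'
    have hss : Real.sqrt ((deriv g ξ).1 ^ 2 + (deriv g ξ).2 ^ 2) = speed g ξ := rfl
    rw [hss] at h
    convert h using 1
    push_cast
    field_simp
  -- derivatives of the tangent components
  have hτ1 : HasDerivAt (fun t => (deriv g t).1 / speed g t)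
      (((deriv (deriv g) ξ).1 * speed g ξ - (deriv g ξ).1 *
        (((deriv g ξ).1 * (deriv (deriv g) ξ).1 + (deriv g ξ).2 * (deriv (deriv g) ξ).2)
          / speed g ξ)) / speed g ξ ^ 2) ξ := hA.div hS hsne
  have hτ2 : HasDerivAt (fun t => (deriv g t).2 / speed g t)
      (((deriv (deriv g) ξ).2 * speed g ξ - (deriv g ξ).2 *
        (((deriv g ξ).1 * (deriv (deriv g) ξ).1 + (deriv g ξ).2 * (deriv (deriv g) ξ).2)
          / speed g ξ)) / speed g ξ ^ 2) ξ := hB.div hS hsne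
  -- ∂P/∂ξ
  have hP1 := hg1.add (hτ2.const_mul η)
  have hP2 := hg2.add (hτ1.neg.const_mul η)
  have hPt := HasDerivAt.prodMk hP1 hP2
  have hfun : (fun t => frenetMap g (η, t))
      = fun t => ((g t).1 + η * ((deriv g t).2 / speed g t),
                  (g t).2 + η * (-((deriv g t).1 / speed g t))) := by
    funext t
    simp [frenetMap, unitNormal, unitTangent, Prod.ext_iff]
  have hξd : HasDerivAt (fun t => frenetMap g (η, t))
      ((speed g ξ * (1 + η * signedCurvature g ξ)) • unitTangent g ξ) ξ := by
    rw [hfun]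
    convert hPt using 1
    · rfl
    simp only [signedCurvature, unitTangent, Prod.smul_mk, smul_eq_mul, Prod.mk.injEq]
    exact ⟨alg1 _ _ _ _ _ η hsne hs2, alg2 _ _ _ _ _ η hsne hs2⟩
  refine ⟨?_, ?_, hξd, ?_⟩
  · -- differentiability of the full map
    have hnd : DifferentiableAt ℝ (fun t => unitNormal g t) ξ :=
      DifferentiableAt.prodMk hτ2.differentiableAt hτ1.differentiableAt.neg
    exact (hgd.comp (η, ξ) differentiableAt_snd).add
      (DifferentiableAt.smul (c := Prod.fst) (f := fun p : ℝ × ℝ => unitNormal g p.2) differentiableAt_fst (DifferentiableAt.comp (g := fun t => unitNormal g t) (f := Prod.snd) (η, ξ) hnd differentiableAt_snd))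
  · -- ∂P/∂η
    have h : HasDerivAt (fun t : ℝ => g ξ + t • unitNormal g ξ) ((1:ℝ) • unitNormal g ξ) η :=
      ((hasDerivAt_id η).smul_const _).const_add _
    simpa [frenetMap] using h
  · -- determinant
    simp only [Matrix.det_fin_two_of, unitNormal, unitTangent]
    exact alg3 _ _ _ _ hsne hs2
end

section
/- Let g : ℝ → ℝ² be twice continuously differentiable on a neighborhood of ξ₀ with g'(ξ₀) ≠ 0, and let η₀ ∈ ℝ satisfy 1 + η₀ κ(ξ₀) ≠ 0. Then the Frenet map P(η,ξ) = g(ξ) + η n(ξ) is a local diffeomorphism at (η₀,ξ₀): there exist open neighborhoods U of (η₀,ξ₀) and V of P(η₀,ξ₀) in ℝ² such that P restricted to U is a bijection onto V whose inverse is continuously differentiable. -/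
open Real Set

/-- An invertible 2×2 matrix as a continuous linear equivalence of `ℝ × ℝ`. -/
noncomputable def matEquiv (p q r s : ℝ) (h : p * s - q * r ≠ 0) : (ℝ × ℝ) ≃L[ℝ] (ℝ × ℝ) :=
  LinearEquiv.toContinuousLinearEquiv
  { toFun := fun x => (p * x.1 + q * x.2, r * x.1 + s * x.2)
    invFun := fun y => ((s * y.1 - q * y.2) / (p * s - q * r),
      (-r * y.1 + p * y.2) / (p * s - q * r))
    map_add' := by intro x y; simp [Prod.ext_iff]; constructor <;> ring
    map_smul' := by intro c x; simp [Prod.ext_iff, smul_eq_mul]; constructor <;> ring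
    left_inv := by
      intro x
      simp only [Prod.ext_iff]; constructor <;> (rw [div_eq_iff h]; ring)
    right_inv := by
      intro y
      simp only [Prod.ext_iff]; constructor <;> (rw [mul_div_assoc', mul_div_assoc', ← add_div, div_eq_iff h]; ring) }

/-- If `g` is C² on an open neighborhood of `ξ₀` with `g'(ξ₀) ≠ 0` and `1 + η₀κ(ξ₀) ≠ 0`,
then the Frenet map `P(η,ξ) = g(ξ) + η n(ξ)` is a local diffeomorphism at `(η₀, ξ₀)`:
there are open neighborhoods `U` of `(η₀,ξ₀)` and `V` of `P(η₀,ξ₀)` such that `P`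
restricted to `U` is a bijection onto `V` with a continuously differentiable inverse. -/
theorem frenetMap_local_diffeo (g : ℝ → ℝ × ℝ) (ξ₀ η₀ : ℝ)
    (W : Set ℝ) (hWopen : IsOpen W) (hξ₀W : ξ₀ ∈ W)
    (hg : ContDiffOn ℝ 2 g W) (hg' : deriv g ξ₀ ≠ 0)
    (hκ : 1 + η₀ * signedCurvature g ξ₀ ≠ 0) :
    ∃ U V : Set (ℝ × ℝ), IsOpen U ∧ IsOpen V ∧ (η₀, ξ₀) ∈ U ∧ frenetMap g (η₀, ξ₀) ∈ V ∧
      Set.BijOn (frenetMap g) U V ∧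
      ∃ Q : ℝ × ℝ → ℝ × ℝ, ContDiffOn ℝ 1 Q V ∧
        (∀ p ∈ U, Q (frenetMap g p) = p) ∧ (∀ q ∈ V, frenetMap g (Q q) = q) := by
  have hmem : W ∈ nhds ξ₀ := hWopen.mem_nhds hξ₀W
  have hgat : ContDiffAt ℝ 2 g ξ₀ := hg.contDiffAt hmem
  have hdW : ContDiffOn ℝ 1 (deriv g) W := hg.deriv_of_isOpen hWopen (by norm_num)
  have hdat : ContDiffAt ℝ 1 (deriv g) ξ₀ := hdW.contDiffAt hmem
  set a := (deriv g ξ₀).1 with ha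
  set b := (deriv g ξ₀).2 with hb
  set a' := (deriv (deriv g) ξ₀).1 with ha'
  set b' := (deriv (deriv g) ξ₀).2 with hb'
  have hdd : HasDerivAt (deriv g) (deriv (deriv g) ξ₀) ξ₀ :=
    (hdat.differentiableAt one_ne_zero).hasDerivAt
  have hd1 : HasDerivAt (fun ξ => (deriv g ξ).1) a' ξ₀ := by
    simpa using hdd.hasFDerivAt.fst.hasDerivAt
  have hd2 : HasDerivAt (fun ξ => (deriv g ξ).2) b' ξ₀ := by
    simpa using hdd.hasFDerivAt.snd.hasDerivAt
  have hab : a ^ 2 + b ^ 2 ≠ 0 := by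
    intro h
    apply hg'
    have h1 : a = 0 := by nlinarith [sq_nonneg a, sq_nonneg b]
    have h2 : b = 0 := by nlinarith [sq_nonneg a, sq_nonneg b]
    exact Prod.ext h1 h2
  set v := speed g ξ₀ with hvdef
  have hvsq : v ^ 2 = a ^ 2 + b ^ 2 := Real.sq_sqrt (by positivity)
  have hvpos : 0 < v := Real.sqrt_pos.mpr (lt_of_le_of_ne (by positivity) (Ne.symm hab))
  have hvne : v ≠ 0 := ne_of_gt hvpos
  set v' := (a * a' + b * b') / v with hv'def
  have hspeed : HasDerivAt (speed g) v' ξ₀ := by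
    have hinner : HasDerivAt (fun ξ => (deriv g ξ).1 ^ 2 + (deriv g ξ).2 ^ 2)
        (2 * a ^ 1 * a' + 2 * b ^ 1 * b') ξ₀ :=
      ((hd1.pow 2).add (hd2.pow 2)).congr_deriv (by push_cast; ring)
    have := (Real.hasDerivAt_sqrt hab).comp ξ₀ hinner
    exact this.congr_deriv (by rw [show √(a ^ 2 + b ^ 2) = v from rfl, hv'def]; field_simp)
  set n₁ := b / v with hn₁
  set n₂ := -(a / v) with hn₂
  set n₁' := (b' * v - b * v') / v ^ 2 with hn₁'
  set n₂' := -((a' * v - a * v') / v ^ 2) with hn₂'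
  have hNfun : unitNormal g = fun ξ =>
      ((deriv g ξ).2 / speed g ξ, -((deriv g ξ).1 / speed g ξ)) := rfl
  have hN : HasDerivAt (unitNormal g) (n₁', n₂') ξ₀ := by
    rw [hNfun]
    exact (hd2.div hspeed hvne).prodMk (hd1.div hspeed hvne).neg
  have hNval : unitNormal g ξ₀ = (n₁, n₂) := rfl
  -- the determinant identity
  have hdet : n₁ * (b + η₀ * n₂') - (a + η₀ * n₁') * n₂ ≠ 0 := by
    have e1 : b * n₂' + a * n₁' = (a * b' - a' * b) / v := by
      rw [hn₁', hn₂', hv'def]; field_simp; ring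
    have hκdef : signedCurvature g ξ₀ = (a * b' - b * a') / v ^ 3 := rfl
    have key : n₁ * (b + η₀ * n₂') - (a + η₀ * n₁') * n₂ =
        v * (1 + η₀ * signedCurvature g ξ₀) := by
      have e2 : n₁ * (b + η₀ * n₂') - (a + η₀ * n₁') * n₂
          = (a ^ 2 + b ^ 2 + η₀ * (b * n₂' + a * n₁')) / v := by
        rw [hn₁, hn₂]; field_simp; ring
      rw [e2, e1, hκdef, ← hvsq]; field_simp
    rw [key]
    exact mul_ne_zero hvne hκ
  set e := matEquiv n₁ (a + η₀ * n₁') n₂ (b + η₀ * n₂') hdet with hedef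
  -- the Fréchet derivative of the Frenet map
  have hF' : HasFDerivAt (frenetMap g) (e : (ℝ × ℝ) →L[ℝ] (ℝ × ℝ)) (η₀, ξ₀) := by
    have h1 : HasFDerivAt (fun p : ℝ × ℝ => g p.2)
        ((ContinuousLinearMap.smulRight (1 : ℝ →L[ℝ] ℝ) (deriv g ξ₀)).comp
          (ContinuousLinearMap.snd ℝ ℝ ℝ)) (η₀, ξ₀) :=
      ((hgat.differentiableAt two_ne_zero).hasDerivAt.hasFDerivAt).comp _ hasFDerivAt_snd
    have h2 : HasFDerivAt (fun p : ℝ × ℝ => unitNormal g p.2)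
        ((ContinuousLinearMap.smulRight (1 : ℝ →L[ℝ] ℝ) ((n₁', n₂') : ℝ × ℝ)).comp
          (ContinuousLinearMap.snd ℝ ℝ ℝ)) (η₀, ξ₀) :=
      by have := (hN.hasFDerivAt).comp (η₀, ξ₀) (hasFDerivAt_snd (𝕜 := ℝ) (p := (η₀, ξ₀))); exact this
    have h3 := (hasFDerivAt_fst (𝕜 := ℝ) (E := ℝ) (F := ℝ) (p := (η₀, ξ₀))).smul h2
    have hF := h1.add h3
    have hLeq : (e : (ℝ × ℝ) →L[ℝ] (ℝ × ℝ)) =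
        (ContinuousLinearMap.smulRight (1 : ℝ →L[ℝ] ℝ) (deriv g ξ₀)).comp
          (ContinuousLinearMap.snd ℝ ℝ ℝ) +
        ((η₀, ξ₀).1 • (ContinuousLinearMap.smulRight (1 : ℝ →L[ℝ] ℝ)
            ((n₁', n₂') : ℝ × ℝ)).comp (ContinuousLinearMap.snd ℝ ℝ ℝ) +
          (ContinuousLinearMap.fst ℝ ℝ ℝ).smulRight (unitNormal g (η₀, ξ₀).2)) := by
      apply ContinuousLinearMap.ext
      intro x
      show (n₁ * x.1 + (a + η₀ * n₁') * x.2, n₂ * x.1 + (b + η₀ * n₂') * x.2) = _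
      have : unitNormal g (η₀, ξ₀).2 = (n₁, n₂) := hNval
      simp [this, ContinuousLinearMap.smulRight_apply, Prod.ext_iff, smul_eq_mul,
        Prod.smul_def, ← ha, ← hb]
      constructor <;> ring
    rw [hLeq]
    exact hF
  -- the Frenet map is C¹ at the base point
  have hFc : ContDiffAt ℝ 1 (frenetMap g) (η₀, ξ₀) := by
    have hc1 : ContDiffAt ℝ 1 (fun ξ => (deriv g ξ).1) ξ₀ :=
      (contDiff_fst.contDiffAt).comp ξ₀ hdat
    have hc2 : ContDiffAt ℝ 1 (fun ξ => (deriv g ξ).2) ξ₀ :=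
      (contDiff_snd.contDiffAt).comp ξ₀ hdat
    have hsc : ContDiffAt ℝ 1 (speed g) ξ₀ :=
      (Real.contDiffAt_sqrt hab).comp ξ₀ ((hc1.pow 2).add (hc2.pow 2))
    have hNc : ContDiffAt ℝ 1 (unitNormal g) ξ₀ := by
      rw [hNfun]
      exact (hc2.div hsc hvne).prodMk (hc1.div hsc hvne).neg
    exact (((hgat.of_le one_le_two).comp _ contDiffAt_snd).add
      (contDiffAt_fst.smul (by have := hNc.comp (η₀, ξ₀) (contDiffAt_snd (p := (η₀, ξ₀))); exact this)))
  -- inverse function theorem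
  set Φ := hFc.toOpenPartialHomeomorph (frenetMap g) hF' one_ne_zero with hΦdef
  have hΦcoe : (Φ : ℝ × ℝ → ℝ × ℝ) = frenetMap g := rfl
  have hsrc : (η₀, ξ₀) ∈ Φ.source :=
    hFc.mem_toOpenPartialHomeomorph_source hF' one_ne_zero
  have htgt : frenetMap g (η₀, ξ₀) ∈ Φ.target :=
    hFc.image_mem_toOpenPartialHomeomorph_target hF' one_ne_zero
  have hQ : ContDiffAt ℝ 1 (Φ.symm) (frenetMap g (η₀, ξ₀)) := by
    have := hFc.to_localInverse (f' := e) hF' one_ne_zero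
    exact this
  obtain ⟨t, ht_mem, htQ⟩ := hQ.contDiffOn le_rfl (by simp)
  obtain ⟨V', hV'sub, hV'open, hV'mem⟩ := mem_nhds_iff.mp ht_mem
  refine ⟨Φ.source ∩ Φ ⁻¹' V', Φ.target ∩ V', Φ.isOpen_inter_preimage hV'open,
    Φ.open_target.inter hV'open, ⟨hsrc, ?_⟩, ⟨htgt, hV'mem⟩, ?_, Φ.symm, ?_, ?_, ?_⟩
  · show Φ (η₀, ξ₀) ∈ V'
    rw [hΦcoe]; exact hV'mem
  · constructor
    · intro p hp
      exact ⟨hΦcoe ▸ Φ.map_source hp.1, hΦcoe ▸ hp.2⟩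
    constructor
    · exact fun p hp q hq hpq => Φ.injOn hp.1 hq.1 (by rw [hΦcoe]; exact hpq)
    · intro q hq
      refine ⟨Φ.symm q, ⟨⟨Φ.map_target hq.1, ?_⟩, ?_⟩⟩
      · show Φ (Φ.symm q) ∈ V'
        rw [Φ.right_inv hq.1]; exact hq.2
      · show frenetMap g (Φ.symm q) = q
        rw [← hΦcoe]; exact Φ.right_inv hq.1
  · exact htQ.mono (subset_trans inter_subset_right hV'sub)
  · intro p hp
    rw [← hΦcoe]; exact Φ.left_inv hp.1
  · intro q hq
    rw [← hΦcoe]; exact Φ.right_inv hq.1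
end

section
/- Let g : ℝ → ℝ² be twice continuously differentiable on an open interval containing the compact interval [a,b], injective on [a,b], with g'(ξ) ≠ 0 for all ξ ∈ [a,b]. Then there exists ε > 0 such that the Frenet map P(η,ξ) = g(ξ) + η n(ξ) is injective on the set [−ε,ε] × [a,b]. -/
open Real Set

lemma sq_add_sq_pos {g : ℝ → ℝ × ℝ} {ξ : ℝ} (hd : deriv g ξ ≠ 0) :
    0 < (deriv g ξ).1 ^ 2 + (deriv g ξ).2 ^ 2 := by
  rcases Prod.mk.injEq (deriv g ξ).1 (deriv g ξ).2 0 0 with _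
  have h : (deriv g ξ).1 ≠ 0 ∨ (deriv g ξ).2 ≠ 0 := by
    by_contra h
    push_neg at h
    exact hd (Prod.ext h.1 h.2)
  rcases h with h | h <;> positivity

lemma speed_pos {g : ℝ → ℝ × ℝ} {ξ : ℝ} (hd : deriv g ξ ≠ 0) : 0 < speed g ξ :=
  Real.sqrt_pos.2 (sq_add_sq_pos hd)

lemma speed_sq {g : ℝ → ℝ × ℝ} {ξ : ℝ} :
    speed g ξ ^ 2 = (deriv g ξ).1 ^ 2 + (deriv g ξ).2 ^ 2 :=
  Real.sq_sqrt (by positivity)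

lemma contDiffAt_speed {g : ℝ → ℝ × ℝ} {ξ : ℝ} (hdd : ContDiffAt ℝ 1 (deriv g) ξ)
    (hd : deriv g ξ ≠ 0) : ContDiffAt ℝ 1 (speed g) ξ := by
  have h1 : ContDiffAt ℝ 1 (fun x => (deriv g x).1 ^ 2 + (deriv g x).2 ^ 2) ξ :=
    ((contDiffAt_fst.comp ξ hdd).pow 2).add ((contDiffAt_snd.comp ξ hdd).pow 2)
  exact (Real.contDiffAt_sqrt (sq_add_sq_pos hd).ne').comp ξ h1

lemma contDiffAt_unitNormal {g : ℝ → ℝ × ℝ} {ξ : ℝ} (hdd : ContDiffAt ℝ 1 (deriv g) ξ)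
    (hd : deriv g ξ ≠ 0) : ContDiffAt ℝ 1 (unitNormal g) ξ := by
  have hs := contDiffAt_speed hdd hd
  have h1 : ContDiffAt ℝ 1 (fun x => (deriv g x).1 / speed g x) ξ :=
    (contDiffAt_fst.comp ξ hdd).div hs (speed_pos hd).ne'
  have h2 : ContDiffAt ℝ 1 (fun x => (deriv g x).2 / speed g x) ξ :=
    (contDiffAt_snd.comp ξ hdd).div hs (speed_pos hd).ne'
  exact (h2.prodMk h1.neg)

noncomputable def my2x2 (p q r s : ℝ) (h : p * s - q * r ≠ 0) : (ℝ × ℝ) ≃L[ℝ] (ℝ × ℝ) :=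
  LinearEquiv.toContinuousLinearEquiv
  { toFun := fun x => (p * x.1 + q * x.2, r * x.1 + s * x.2)
    map_add' := by intro x y; simp [Prod.ext_iff]; constructor <;> ring
    map_smul' := by intro c x; simp [Prod.ext_iff, Prod.smul_def, smul_eq_mul]; constructor <;> ring
    invFun := fun y => ((s * y.1 - q * y.2) / (p * s - q * r),
      (-r * y.1 + p * y.2) / (p * s - q * r))
    left_inv := by intro x; simp [Prod.ext_iff]; constructor <;> (rw [div_eq_iff h]; ring)
    right_inv := by intro y; simp [Prod.ext_iff]; constructor <;> (rw [mul_div_assoc', mul_div_assoc', ← add_div, div_eq_iff h]; ring) }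

lemma frenet_det {g : ℝ → ℝ × ℝ} {ξ : ℝ} (hd : deriv g ξ ≠ 0) :
    (unitNormal g ξ).1 * (deriv g ξ).2 - (unitNormal g ξ).2 * (deriv g ξ).1 ≠ 0 := by
  have hs := speed_pos hd
  have hsq := speed_sq (g := g) (ξ := ξ)
  have : (unitNormal g ξ).1 * (deriv g ξ).2 - (unitNormal g ξ).2 * (deriv g ξ).1
      = speed g ξ := by
    simp only [unitNormal, unitTangent]
    field_simp
    nlinarith [hsq]
  rw [this]; exact hs.ne'

lemma frenet_strict {g : ℝ → ℝ × ℝ} {ξ : ℝ} (hg2 : ContDiffAt ℝ 2 g ξ)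
    (hdd : ContDiffAt ℝ 1 (deriv g) ξ) (hd : deriv g ξ ≠ 0) :
    HasStrictFDerivAt (frenetMap g)
      ((my2x2 (unitNormal g ξ).1 (deriv g ξ).1 (unitNormal g ξ).2 (deriv g ξ).2
        (by have := frenet_det hd; intro h; apply this; linarith) :
        (ℝ × ℝ) →L[ℝ] (ℝ × ℝ))) (0, ξ) := by
  have hg1 : HasStrictDerivAt g (deriv g ξ) ξ := hg2.hasStrictDerivAt (by norm_num)
  have hN : ContDiffAt ℝ 1 (unitNormal g) ξ := contDiffAt_unitNormal hdd hd
  have hN1 : HasStrictDerivAt (unitNormal g) (deriv (unitNormal g) ξ) ξ :=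
    hN.hasStrictDerivAt (by norm_num)
  have hsnd : HasStrictFDerivAt (Prod.snd : ℝ × ℝ → ℝ)
      (ContinuousLinearMap.snd ℝ ℝ ℝ) ((0 : ℝ), ξ) := hasStrictFDerivAt_snd
  have hA : HasStrictFDerivAt (fun p : ℝ × ℝ => g p.2)
      ((ContinuousLinearMap.smulRight (1 : ℝ →L[ℝ] ℝ) (deriv g ξ)).comp
        (ContinuousLinearMap.snd ℝ ℝ ℝ)) ((0 : ℝ), ξ) :=
    hg1.hasStrictFDerivAt.comp _ hsnd
  have hB : HasStrictFDerivAt (fun p : ℝ × ℝ => unitNormal g p.2)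
      ((ContinuousLinearMap.smulRight (1 : ℝ →L[ℝ] ℝ) (deriv (unitNormal g) ξ)).comp
        (ContinuousLinearMap.snd ℝ ℝ ℝ)) ((0 : ℝ), ξ) :=
    hN1.hasStrictFDerivAt.comp _ hsnd
  have hfst : HasStrictFDerivAt (fun p : ℝ × ℝ => p.1)
      (ContinuousLinearMap.fst ℝ ℝ ℝ) ((0 : ℝ), ξ) := hasStrictFDerivAt_fst
  have hC := hfst.smul hB
  have hsum := hA.add hC
  have heq : ((ContinuousLinearMap.smulRight (1 : ℝ →L[ℝ] ℝ) (deriv g ξ)).comp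
        (ContinuousLinearMap.snd ℝ ℝ ℝ)) +
      (((0 : ℝ), ξ).1 • ((ContinuousLinearMap.smulRight (1 : ℝ →L[ℝ] ℝ)
          (deriv (unitNormal g) ξ)).comp (ContinuousLinearMap.snd ℝ ℝ ℝ)) +
        (ContinuousLinearMap.fst ℝ ℝ ℝ).smulRight (unitNormal g ((0 : ℝ), ξ).2))
      = (my2x2 (unitNormal g ξ).1 (deriv g ξ).1 (unitNormal g ξ).2 (deriv g ξ).2
        (by have := frenet_det hd; intro h; apply this; linarith) :
        (ℝ × ℝ) →L[ℝ] (ℝ × ℝ)) := by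
    apply ContinuousLinearMap.ext
    rintro ⟨h, k⟩
    show _ = (_ , _)
    simp [my2x2, Prod.ext_iff, Prod.smul_def, smul_eq_mul]
    constructor <;> ring
  rw [heq] at hsum
  exact hsum


/-- If `g` is C² on an open interval containing the compact interval `[a,b]`, injective on
`[a,b]`, with `g' ≠ 0` on `[a,b]`, then there exists `ε > 0` such that the Frenet map
`P(η,ξ) = g(ξ) + η n(ξ)` is injective on `[-ε,ε] × [a,b]`. -/
theorem frenetMap_injective_tube (g : ℝ → ℝ × ℝ) (a b c d : ℝ) (hab : a ≤ b)
    (hsub : Icc a b ⊆ Ioo c d)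
    (hg : ContDiffOn ℝ 2 g (Ioo c d))
    (hinj : Set.InjOn g (Icc a b))
    (hg' : ∀ ξ ∈ Icc a b, deriv g ξ ≠ 0) :
    ∃ ε > 0, Set.InjOn (frenetMap g) (Icc (-ε) ε ×ˢ Icc a b) := by
  classical
  by_contra hcon
  push_neg at hcon
  -- the good open set U
  set U : Set ℝ := Ioo c d ∩ deriv g ⁻¹' ({0}ᶜ) with hU
  have hderivCont : ContinuousOn (deriv g) (Ioo c d) :=
    hg.continuousOn_deriv_of_isOpen isOpen_Ioo (by norm_num)
  have hUopen : IsOpen U :=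
    hderivCont.isOpen_inter_preimage isOpen_Ioo (isOpen_compl_singleton)
  have hUsub : Icc a b ⊆ U := fun x hx => ⟨hsub hx, hg' x hx⟩
  have hderiv1 : ContDiffOn ℝ 1 (deriv g) (Ioo c d) :=
    hg.deriv_of_isOpen isOpen_Ioo (by norm_num)
  have hUd : ∀ ξ ∈ U, deriv g ξ ≠ 0 := fun ξ hξ => hξ.2
  have hUdd : ∀ ξ ∈ U, ContDiffAt ℝ 1 (deriv g) ξ := fun ξ hξ =>
    hderiv1.contDiffAt (isOpen_Ioo.mem_nhds hξ.1)
  have hUg2 : ∀ ξ ∈ U, ContDiffAt ℝ 2 g ξ := fun ξ hξ =>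
    hg.contDiffAt (isOpen_Ioo.mem_nhds hξ.1)
  -- continuity of frenetMap at (η, ξ) for ξ ∈ U
  have hPcont : ∀ η : ℝ, ∀ ξ ∈ U, ContinuousAt (frenetMap g) (η, ξ) := by
    intro η ξ hξ
    have hN : ContDiffAt ℝ 1 (unitNormal g) ξ := contDiffAt_unitNormal (hUdd ξ hξ) (hUd ξ hξ)
    have h1 : ContDiffAt ℝ 1 (fun p : ℝ × ℝ => g p.2) (η, ξ) :=
      ((hUg2 ξ hξ).of_le one_le_two).comp (η, ξ) contDiffAt_snd
    have h2 : ContDiffAt ℝ 1 (fun p : ℝ × ℝ => p.1 • unitNormal g p.2) (η, ξ) :=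
      contDiffAt_fst.smul (hN.comp (η, ξ) contDiffAt_snd)
    exact (h1.add h2).continuousAt
  -- choose witnesses for failure of injectivity at ε = 1/(n+1)
  have hchoice : ∀ n : ℕ, ∃ p q : ℝ × ℝ,
      p ∈ Icc (-(1 / (n + 1) : ℝ)) (1 / (n + 1)) ×ˢ Icc a b ∧
      q ∈ Icc (-(1 / (n + 1) : ℝ)) (1 / (n + 1)) ×ˢ Icc a b ∧
      frenetMap g p = frenetMap g q ∧ p ≠ q := by
    intro n
    have hpos : (0 : ℝ) < 1 / (n + 1) := by positivity
    have := hcon (1 / (n + 1)) hpos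
    rw [Set.InjOn] at this
    push_neg at this
    obtain ⟨p, hp, q, hq, hfe, hne⟩ := this
    exact ⟨p, q, hp, hq, hfe, hne⟩
  choose p q hp hq hfe hne using hchoice
  -- compactness
  have hKc : IsCompact ((Icc (-(1:ℝ)) 1 ×ˢ Icc a b) ×ˢ (Icc (-(1:ℝ)) 1 ×ˢ Icc a b)) :=
    ((isCompact_Icc.prod isCompact_Icc).prod (isCompact_Icc.prod isCompact_Icc))
  have hsubK : ∀ n : ℕ, Icc (-(1 / (n + 1) : ℝ)) (1 / (n + 1)) ⊆ Icc (-(1:ℝ)) 1 := by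
    intro n
    apply Icc_subset_Icc
    · have : (1 : ℝ) / (n + 1) ≤ 1 := by
        rw [div_le_one (by positivity)]; linarith [Nat.cast_nonneg (α := ℝ) n]
      linarith
    · rw [div_le_one (by positivity)]; linarith [Nat.cast_nonneg (α := ℝ) n]
  have hmemK : ∀ n, (p n, q n) ∈ (Icc (-(1:ℝ)) 1 ×ˢ Icc a b) ×ˢ (Icc (-(1:ℝ)) 1 ×ˢ Icc a b) := by
    intro n
    exact ⟨⟨hsubK n (hp n).1, (hp n).2⟩, ⟨hsubK n (hq n).1, (hq n).2⟩⟩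
  obtain ⟨x, hxK, φ, hφ, hconv⟩ := hKc.tendsto_subseq hmemK
  have hpconv : Filter.Tendsto (fun n => p (φ n)) Filter.atTop (nhds x.1) :=
    (continuous_fst.tendsto x).comp hconv
  have hqconv : Filter.Tendsto (fun n => q (φ n)) Filter.atTop (nhds x.2) :=
    (continuous_snd.tendsto x).comp hconv
  -- the η-components tend to 0
  have hbound : Filter.Tendsto (fun n : ℕ => (1 : ℝ) / (n + 1)) Filter.atTop (nhds 0) :=
    tendsto_one_div_add_atTop_nhds_zero_nat
  have hx1 : x.1.1 = 0 := by
    have h1 : Filter.Tendsto (fun n => (p (φ n)).1) Filter.atTop (nhds x.1.1) :=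
      (continuous_fst.tendsto x.1).comp hpconv
    have h2 : Filter.Tendsto (fun n => (p (φ n)).1) Filter.atTop (nhds 0) := by
      apply squeeze_zero_norm (a := fun n : ℕ => (1 : ℝ) / (n + 1))
      · intro n
        have hm := (hp (φ n)).1
        rw [Set.mem_Icc] at hm
        have habs : |(p (φ n)).1| ≤ 1 / ((φ n : ℝ) + 1) := abs_le.2 hm
        refine habs.trans ?_
        apply div_le_div_of_nonneg_left one_pos.le (by positivity) ?_ |>.trans_eq rfl
        · exact add_le_add_left (Nat.cast_le.2 (hφ.le_apply)) 1
      · exact hbound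
    exact tendsto_nhds_unique h1 h2
  have hx2 : x.2.1 = 0 := by
    have h1 : Filter.Tendsto (fun n => (q (φ n)).1) Filter.atTop (nhds x.2.1) :=
      (continuous_fst.tendsto x.2).comp hqconv
    have h2 : Filter.Tendsto (fun n => (q (φ n)).1) Filter.atTop (nhds 0) := by
      apply squeeze_zero_norm (a := fun n : ℕ => (1 : ℝ) / (n + 1))
      · intro n
        have hm := (hq (φ n)).1
        rw [Set.mem_Icc] at hm
        have habs : |(q (φ n)).1| ≤ 1 / ((φ n : ℝ) + 1) := abs_le.2 hm
        refine habs.trans ?_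
        apply div_le_div_of_nonneg_left one_pos.le (by positivity) ?_ |>.trans_eq rfl
        · exact add_le_add_left (Nat.cast_le.2 (hφ.le_apply)) 1
      · exact hbound
    exact tendsto_nhds_unique h1 h2
  have hξ1 : x.1.2 ∈ Icc a b := hxK.1.2
  have hξ2 : x.2.2 ∈ Icc a b := hxK.2.2
  -- images agree in the limit
  have hPx : frenetMap g x.1 = frenetMap g x.2 := by
    have h1 : Filter.Tendsto (fun n => frenetMap g (p (φ n))) Filter.atTop
        (nhds (frenetMap g x.1)) := by
      have := hPcont x.1.1 x.1.2 (hUsub hξ1)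
      rw [show (x.1.1, x.1.2) = x.1 from rfl] at this
      exact this.tendsto.comp hpconv
    have h2 : Filter.Tendsto (fun n => frenetMap g (q (φ n))) Filter.atTop
        (nhds (frenetMap g x.2)) := by
      have := hPcont x.2.1 x.2.2 (hUsub hξ2)
      rw [show (x.2.1, x.2.2) = x.2 from rfl] at this
      exact this.tendsto.comp hqconv
    have heqseq : (fun n => frenetMap g (p (φ n))) = fun n => frenetMap g (q (φ n)) := by
      funext n; exact hfe (φ n)
    rw [heqseq] at h1
    exact tendsto_nhds_unique h1 h2
  -- hence the limit base points agree
  have hxx : x.1 = x.2 := by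
    have hg1 : frenetMap g x.1 = g x.1.2 := by
      have : x.1 = (0, x.1.2) := Prod.ext hx1 rfl
      rw [this]; simp [frenetMap]
    have hg2 : frenetMap g x.2 = g x.2.2 := by
      have : x.2 = (0, x.2.2) := Prod.ext hx2 rfl
      rw [this]; simp [frenetMap]
    have : g x.1.2 = g x.2.2 := by rw [← hg1, ← hg2, hPx]
    have h22 := hinj hξ1 hξ2 this
    exact Prod.ext (hx1.trans hx2.symm) h22
  -- local injectivity at (0, x.1.2) via inverse function theorem
  set ξ₀ := x.1.2 with hξ₀
  have hξ₀U : ξ₀ ∈ U := hUsub hξ1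
  have hstrict := frenet_strict (hUg2 ξ₀ hξ₀U) (hUdd ξ₀ hξ₀U) (hUd ξ₀ hξ₀U)
  set PH := hstrict.toOpenPartialHomeomorph (frenetMap g) with hPH
  have hsrc : ((0 : ℝ), ξ₀) ∈ PH.source := hstrict.mem_toOpenPartialHomeomorph_source
  have hopen : IsOpen PH.source := PH.open_source
  have hx1eq : x.1 = ((0 : ℝ), ξ₀) := Prod.ext hx1 rfl
  have hpconv' : Filter.Tendsto (fun n => p (φ n)) Filter.atTop (nhds ((0 : ℝ), ξ₀)) := by
    rw [← hx1eq]; exact hpconv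
  have hqconv' : Filter.Tendsto (fun n => q (φ n)) Filter.atTop (nhds ((0 : ℝ), ξ₀)) := by
    rw [← hx1eq, hxx]; exact hqconv
  have hev1 : ∀ᶠ n in Filter.atTop, p (φ n) ∈ PH.source :=
    hpconv' (hopen.mem_nhds hsrc)
  have hev2 : ∀ᶠ n in Filter.atTop, q (φ n) ∈ PH.source :=
    hqconv' (hopen.mem_nhds hsrc)
  obtain ⟨n, hn1, hn2⟩ := (hev1.and hev2).exists
  have hPHinj : Set.InjOn (frenetMap g) PH.source := by
    have := PH.injOn
    rwa [show (PH : ℝ × ℝ → ℝ × ℝ) = frenetMap g from rfl] at this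
  exact hne (φ n) (hPHinj hn1 hn2 (hfe (φ n)))
end

section
/- Let g : ℝ → ℝ² be three times continuously differentiable on an open interval I with g'(ξ) ≠ 0 on I, let u : ℝ² → ℝ be twice continuously differentiable, and let (η,ξ) ∈ ℝ × I satisfy 1 + η κ(ξ) ≠ 0. Set û(η,ξ) = u(P(η,ξ)). Then the Laplacian of u transforms in Frenet coordinates as Δu(P(η,ξ)) = û_ηη(η,ξ) + J₀(η,ξ) û_ξξ(η,ξ) + J₁(η,ξ) û_η(η,ξ) + J₂(η,ξ) û_ξ(η,ξ), where ψ(η,ξ) = (1 + ηκ(ξ))⁻¹, J₀ = (ψ/‖g'(ξ)‖)², J₁ = κ(ξ)ψ, and J₂ = −(ψ/‖g'(ξ)‖)² ( η κ'(ξ) ψ + (g'(ξ)·g''(ξ))/‖g'(ξ)‖² ). -/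
open Real Set


private lemma clm_row_expand (T : ℝ × ℝ →L[ℝ] ℝ) (c d : ℝ) :
    T (c, d) = c * T (1, 0) + d * T (0, 1) := by
  have h : ((c:ℝ), (d:ℝ)) = c • ((1:ℝ), (0:ℝ)) + d • ((0:ℝ), (1:ℝ)) := by
    simp [Prod.ext_iff]
  rw [h, map_add, map_smul, map_smul]; simp

private lemma clm2_expand (H : ℝ × ℝ →L[ℝ] (ℝ × ℝ →L[ℝ] ℝ)) (a b c d : ℝ) :
    H (a, b) (c, d) =
      a*c*(H (1,0) (1,0)) + a*d*(H (1,0) (0,1)) + b*c*(H (0,1) (1,0)) + b*d*(H (0,1) (0,1)) := by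
  have h : ((a:ℝ), (b:ℝ)) = a • ((1:ℝ), (0:ℝ)) + b • ((0:ℝ), (1:ℝ)) := by
    simp [Prod.ext_iff]
  rw [h, map_add, map_smul, map_smul, ContinuousLinearMap.add_apply,
    ContinuousLinearMap.smul_apply, ContinuousLinearMap.smul_apply,
    clm_row_expand (H (1,0)) c d, clm_row_expand (H (0,1)) c d]
  simp; ring

private lemma hasDerivAt_slice1 (u : ℝ × ℝ → ℝ) {p : ℝ × ℝ} (hu : DifferentiableAt ℝ u p) :
    HasDerivAt (fun t => u (t, p.2)) (fderiv ℝ u p (1, 0)) p.1 := by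
  have h := hu.hasFDerivAt.comp_hasDerivAt p.1
    ((hasDerivAt_id p.1).prodMk (hasDerivAt_const p.1 p.2))
  exact h

private lemma hasDerivAt_slice2 (u : ℝ × ℝ → ℝ) {p : ℝ × ℝ} (hu : DifferentiableAt ℝ u p) :
    HasDerivAt (fun t => u (p.1, t)) (fderiv ℝ u p (0, 1)) p.2 := by
  have h := hu.hasFDerivAt.comp_hasDerivAt p.2
    ((hasDerivAt_const p.2 p.1).prodMk (hasDerivAt_id p.2))
  exact h



/-- Partial derivative with respect to the first coordinate. -/
noncomputable def pd1 (f : ℝ × ℝ → ℝ) (p : ℝ × ℝ) : ℝ := deriv (fun t => f (t, p.2)) p.1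

/-- Partial derivative with respect to the second coordinate. -/
noncomputable def pd2 (f : ℝ × ℝ → ℝ) (p : ℝ × ℝ) : ℝ := deriv (fun t => f (p.1, t)) p.2

set_option maxHeartbeats 4000000 in
set_option maxRecDepth 100000 in
/-- Transformation of the Laplacian to Frenet coordinates: if `g` is C³ on an open interval
with `g' ≠ 0`, `u` is C², and `1 + ηκ(ξ) ≠ 0`, then with `û = u ∘ P`,
`Δu(P(η,ξ)) = û_ηη + J₀ û_ξξ + J₁ û_η + J₂ û_ξ` at `(η,ξ)`, where `ψ = (1+ηκ)⁻¹`,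
`J₀ = (ψ/‖g'‖)²`, `J₁ = κψ`, and `J₂ = -(ψ/‖g'‖)² (ηκ'ψ + (g'·g'')/‖g'‖²)`. -/
theorem laplacian_frenet_coords (a b : ℝ) (g : ℝ → ℝ × ℝ)
    (hg : ContDiffOn ℝ 3 g (Ioo a b))
    (hg' : ∀ t ∈ Ioo a b, deriv g t ≠ 0)
    (u : ℝ × ℝ → ℝ) (hu : ContDiff ℝ 2 u)
    (η ξ : ℝ) (hξ : ξ ∈ Ioo a b)
    (hψ : 1 + η * signedCurvature g ξ ≠ 0) :
    pd1 (pd1 u) (frenetMap g (η, ξ)) + pd2 (pd2 u) (frenetMap g (η, ξ)) =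
      pd1 (pd1 (u ∘ frenetMap g)) (η, ξ)
      + ((1 + η * signedCurvature g ξ)⁻¹ / speed g ξ) ^ 2 *
          pd2 (pd2 (u ∘ frenetMap g)) (η, ξ)
      + signedCurvature g ξ * (1 + η * signedCurvature g ξ)⁻¹ *
          pd1 (u ∘ frenetMap g) (η, ξ)
      + (-(((1 + η * signedCurvature g ξ)⁻¹ / speed g ξ) ^ 2 *
            (η * deriv (signedCurvature g) ξ * (1 + η * signedCurvature g ξ)⁻¹ +
              ((deriv g ξ).1 * (deriv (deriv g) ξ).1 +
                (deriv g ξ).2 * (deriv (deriv g) ξ).2) / speed g ξ ^ 2))) *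
          pd2 (u ∘ frenetMap g) (η, ξ) := by
  have hI : IsOpen (Ioo a b) := isOpen_Ioo
  -- first derivative everywhere on I
  have hg1 : ∀ t ∈ Ioo a b, HasDerivAt g (deriv g t) t := fun t ht =>
    ((hg.differentiableOn (by norm_num)).differentiableAt (hI.mem_nhds ht)).hasDerivAt
  have hgd : ContDiffOn ℝ 2 (deriv g) (Ioo a b) := hg.deriv_of_isOpen hI (by norm_num)
  have hg2 : ∀ t ∈ Ioo a b, HasDerivAt (deriv g) (deriv (deriv g) t) t := fun t ht =>
    ((hgd.differentiableOn (by norm_num)).differentiableAt (hI.mem_nhds ht)).hasDerivAt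
  have hgdd : ContDiffOn ℝ 1 (deriv (deriv g)) (Ioo a b) := hgd.deriv_of_isOpen hI (by norm_num)
  have hg3 : HasDerivAt (deriv (deriv g)) (deriv (deriv (deriv g)) ξ) ξ :=
    ((hgdd.differentiableOn (by norm_num)).differentiableAt (hI.mem_nhds hξ)).hasDerivAt
  -- component derivatives
  have hx1 : ∀ t ∈ Ioo a b, HasDerivAt (fun r => (deriv g r).1) ((deriv (deriv g) t).1) t := by
    intro t ht
    exact hasFDerivAt_fst.comp_hasDerivAt t (hg2 t ht)
  have hy1 : ∀ t ∈ Ioo a b, HasDerivAt (fun r => (deriv g r).2) ((deriv (deriv g) t).2) t := by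
    intro t ht
    exact hasFDerivAt_snd.comp_hasDerivAt t (hg2 t ht)
  have hx2 : HasDerivAt (fun r => (deriv (deriv g) r).1) ((deriv (deriv (deriv g)) ξ).1) ξ := by
    exact hasFDerivAt_fst.comp_hasDerivAt ξ hg3
  have hy2 : HasDerivAt (fun r => (deriv (deriv g) r).2) ((deriv (deriv (deriv g)) ξ).2) ξ := by
    exact hasFDerivAt_snd.comp_hasDerivAt ξ hg3
  -- speed positivity
  have hspos : ∀ t ∈ Ioo a b, 0 < speed g t := by
    intro t ht
    apply Real.sqrt_pos.mpr
    rcases eq_or_ne ((deriv g t).1 ^ 2 + (deriv g t).2 ^ 2) 0 with h | h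
    · exfalso; apply hg' t ht
      have h1 : (deriv g t).1 = 0 := by nlinarith [sq_nonneg (deriv g t).1, sq_nonneg (deriv g t).2]
      have h2 : (deriv g t).2 = 0 := by nlinarith [sq_nonneg (deriv g t).1, sq_nonneg (deriv g t).2]
      exact Prod.ext h1 h2
    · exact lt_of_le_of_ne (by positivity) (Ne.symm h)
  have hqeq : ∀ t ∈ Ioo a b, speed g t ^ 2 = (deriv g t).1 ^ 2 + (deriv g t).2 ^ 2 := by
    intro t ht
    exact Real.sq_sqrt (by positivity)
  -- speed derivative
  have hs : ∀ t ∈ Ioo a b, HasDerivAt (speed g)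
      (((deriv g t).1 * (deriv (deriv g) t).1 + (deriv g t).2 * (deriv (deriv g) t).2)
        / speed g t) t := by
    intro t ht
    have hq' : HasDerivAt (fun r => (deriv g r).1 ^ 2 + (deriv g r).2 ^ 2)
        (2 * (deriv g t).1 * (deriv (deriv g) t).1 + 2 * (deriv g t).2 * (deriv (deriv g) t).2)
        t := by
      have h1 := (hx1 t ht).pow 2
      have h2 := (hy1 t ht).pow 2
      refine (h1.add h2).congr_deriv (Eq.symm ?_); ring
    have hqne : (deriv g t).1 ^ 2 + (deriv g t).2 ^ 2 ≠ 0 := by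
      nlinarith [hspos t ht, hqeq t ht]
    have h := (Real.hasDerivAt_sqrt hqne).comp t hq'
    have hfun : (Real.sqrt ∘ fun r => (deriv g r).1 ^ 2 + (deriv g r).2 ^ 2) = speed g := rfl
    rw [hfun] at h
    refine h.congr_deriv (Eq.symm ?_)
    have hsne := (hspos t ht).ne'
    have : Real.sqrt ((deriv g t).1 ^ 2 + (deriv g t).2 ^ 2) = speed g t := rfl
    rw [this]
    field_simp

  -- unit normal derivative: n' = kappa * g'
  have hn1 : ∀ t ∈ Ioo a b, HasDerivAt (fun r => (deriv g r).2 / speed g r)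
      (signedCurvature g t * (deriv g t).1) t := by
    intro t ht
    have hsne := (hspos t ht).ne'
    have h := (hy1 t ht).div (hs t ht) hsne
    refine h.congr_deriv (Eq.symm ?_)
    unfold signedCurvature
    rw [div_mul_eq_mul_div, div_eq_div_iff (by positivity) (by positivity)]
    field_simp
    linear_combination (-(deriv (deriv g) t).2) * hqeq t ht
  have hn2 : ∀ t ∈ Ioo a b, HasDerivAt (fun r => -((deriv g r).1 / speed g r))
      (signedCurvature g t * (deriv g t).2) t := by
    intro t ht
    have hsne := (hspos t ht).ne'
    have h := ((hx1 t ht).div (hs t ht) hsne).neg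
    refine h.congr_deriv (Eq.symm ?_)
    unfold signedCurvature
    rw [div_mul_eq_mul_div, ← neg_div, div_eq_div_iff (by positivity) (by positivity)]
    field_simp
    linear_combination ((deriv (deriv g) t).1) * hqeq t ht
  have hN : ∀ t ∈ Ioo a b, HasDerivAt (unitNormal g)
      (signedCurvature g t * (deriv g t).1, signedCurvature g t * (deriv g t).2) t := by
    intro t ht
    exact (hn1 t ht).prodMk (hn2 t ht)

  -- derivative of t ↦ P(η,t)
  have hPη : ∀ t ∈ Ioo a b, HasDerivAt (fun r => frenetMap g (η, r))
      ((1 + η * signedCurvature g t) * (deriv g t).1,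
       (1 + η * signedCurvature g t) * (deriv g t).2) t := by
    intro t ht
    have h := (hg1 t ht).add ((hN t ht).const_smul η)
    have hfun : (fun r => frenetMap g (η, r)) = fun r => g r + η • unitNormal g r := rfl
    rw [hfun]
    refine h.congr_deriv (Eq.symm ?_)
    apply Prod.ext <;> simp <;> try ring
  -- curvature is differentiable at ξ
  have hκdiff : DifferentiableAt ℝ (signedCurvature g) ξ := by
    have hnum : DifferentiableAt ℝ (fun t => (deriv g t).1 * (deriv (deriv g) t).2
        - (deriv g t).2 * (deriv (deriv g) t).1) ξ :=
      ((hx1 ξ hξ).differentiableAt.mul hy2.differentiableAt).sub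
        ((hy1 ξ hξ).differentiableAt.mul hx2.differentiableAt)
    have hden : DifferentiableAt ℝ (fun t => speed g t ^ 3) ξ :=
      (hs ξ hξ).differentiableAt.pow 3
    have hdne : speed g ξ ^ 3 ≠ 0 := pow_ne_zero _ (hspos ξ hξ).ne'
    exact (hnum.div hden hdne : _)
  have hκ : HasDerivAt (signedCurvature g) (deriv (signedCurvature g) ξ) ξ :=
    hκdiff.hasDerivAt
  -- derivative of V
  have hV : HasDerivAt (fun t => ((1 + η * signedCurvature g t) * (deriv g t).1,
        (1 + η * signedCurvature g t) * (deriv g t).2))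
      ((η * deriv (signedCurvature g) ξ * (deriv g ξ).1
          + (1 + η * signedCurvature g ξ) * (deriv (deriv g) ξ).1,
        η * deriv (signedCurvature g) ξ * (deriv g ξ).2
          + (1 + η * signedCurvature g ξ) * (deriv (deriv g) ξ).2)) ξ := by
    have hc : HasDerivAt (fun t => 1 + η * signedCurvature g t)
        (η * deriv (signedCurvature g) ξ) ξ := by
      exact ((hasDerivAt_const ξ (1:ℝ)).add (hκ.const_mul η)).congr_deriv (zero_add _)
    have h1 := hc.mul (hx1 ξ hξ)
    have h2 := hc.mul (hy1 ξ hξ)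
    have h3 := h1.prodMk h2
    have e1 : η * deriv (signedCurvature g) ξ * (deriv g ξ).1
        + (1 + η * signedCurvature g ξ) * (deriv (deriv g) ξ).1
        = η * deriv (signedCurvature g) ξ * (deriv g ξ).1
          + (1 + η * signedCurvature g ξ) * (deriv (deriv g) ξ).1 := rfl
    exact h3
  -- the u-side machinery
  have hud : Differentiable ℝ u := hu.differentiable (by norm_num)
  have hLc : ContDiff ℝ 1 (fderiv ℝ u) := hu.fderiv_right (by norm_num)
  have hLd : Differentiable ℝ (fderiv ℝ u) := hLc.differentiable one_ne_zero
  set L := fderiv ℝ u with hLdef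
  set P := frenetMap g (η, ξ) with hP
  set H := fderiv ℝ L P with hH
  have hpd1u : pd1 u = fun x => L x (1, 0) := by
    funext x; exact (hasDerivAt_slice1 u (hud x)).deriv
  have hpd2u : pd2 u = fun x => L x (0, 1) := by
    funext x; exact (hasDerivAt_slice2 u (hud x)).deriv
  have hLHS1 : pd1 (pd1 u) P = H (1, 0) (1, 0) := by
    rw [hpd1u]
    have h1 : HasDerivAt (fun t => L (t, P.2)) (H (1, 0)) P.1 := by
      have := (hLd P).hasFDerivAt.comp_hasDerivAt P.1
        ((hasDerivAt_id P.1).prodMk (hasDerivAt_const P.1 P.2))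
      exact this
    have h2 := h1.clm_apply (hasDerivAt_const P.1 ((1:ℝ), (0:ℝ)))
    exact h2.deriv.trans (by simp)
  have hLHS2 : pd2 (pd2 u) P = H (0, 1) (0, 1) := by
    rw [hpd2u]
    have h1 : HasDerivAt (fun t => L (P.1, t)) (H (0, 1)) P.2 := by
      have := (hLd P).hasFDerivAt.comp_hasDerivAt P.2
        ((hasDerivAt_const P.2 P.1).prodMk (hasDerivAt_id P.2))
      exact this
    have h2 := h1.clm_apply (hasDerivAt_const P.2 ((0:ℝ), (1:ℝ)))
    exact h2.deriv.trans (by simp)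
  -- pd1 of û
  have hline : ∀ t : ℝ, HasDerivAt (fun r => frenetMap g (r, ξ)) (unitNormal g ξ) t := by
    intro t
    have hfun : (fun r : ℝ => frenetMap g (r, ξ)) = fun r => g ξ + r • unitNormal g ξ := rfl
    rw [hfun]
    exact ((hasDerivAt_const t (g ξ)).add ((hasDerivAt_id t).smul_const (unitNormal g ξ))).congr_deriv (by simp)
  have hpd1fun : ∀ t : ℝ, pd1 (u ∘ frenetMap g) (t, ξ)
      = L (frenetMap g (t, ξ)) (unitNormal g ξ) := by
    intro t
    exact ((hud (frenetMap g (t, ξ))).hasFDerivAt.comp_hasDerivAt t (hline t)).deriv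
  have hRHS1 : pd1 (pd1 (u ∘ frenetMap g)) (η, ξ)
      = H (unitNormal g ξ) (unitNormal g ξ) := by
    have h0 : pd1 (pd1 (u ∘ frenetMap g)) (η, ξ)
        = deriv (fun t => pd1 (u ∘ frenetMap g) (t, ξ)) η := rfl
    rw [h0, funext hpd1fun]
    have h1 : HasDerivAt (fun t => L (frenetMap g (t, ξ))) (H (unitNormal g ξ)) η :=
      (hLd P).hasFDerivAt.comp_hasDerivAt η (hline η)
    have h2 := h1.clm_apply (hasDerivAt_const η (unitNormal g ξ))
    simpa using h2.deriv
  -- pd2 of û on the interval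
  have hpd2fun : ∀ t ∈ Ioo a b, pd2 (u ∘ frenetMap g) (η, t)
      = L (frenetMap g (η, t)) ((1 + η * signedCurvature g t) * (deriv g t).1,
          (1 + η * signedCurvature g t) * (deriv g t).2) := by
    intro t ht
    exact ((hud (frenetMap g (η, t))).hasFDerivAt.comp_hasDerivAt t (hPη t ht)).deriv
  have hRHS2 : pd2 (pd2 (u ∘ frenetMap g)) (η, ξ)
      = H ((1 + η * signedCurvature g ξ) * (deriv g ξ).1,
            (1 + η * signedCurvature g ξ) * (deriv g ξ).2)
          ((1 + η * signedCurvature g ξ) * (deriv g ξ).1,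
            (1 + η * signedCurvature g ξ) * (deriv g ξ).2)
        + L P (η * deriv (signedCurvature g) ξ * (deriv g ξ).1
              + (1 + η * signedCurvature g ξ) * (deriv (deriv g) ξ).1,
            η * deriv (signedCurvature g) ξ * (deriv g ξ).2
              + (1 + η * signedCurvature g ξ) * (deriv (deriv g) ξ).2) := by
    have h0 : pd2 (pd2 (u ∘ frenetMap g)) (η, ξ)
        = deriv (fun t => pd2 (u ∘ frenetMap g) (η, t)) ξ := rfl
    have heq : (fun t => pd2 (u ∘ frenetMap g) (η, t)) =ᶠ[nhds ξ]
        (fun t => L (frenetMap g (η, t)) ((1 + η * signedCurvature g t) * (deriv g t).1,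
          (1 + η * signedCurvature g t) * (deriv g t).2)) :=
      Filter.eventuallyEq_of_mem (hI.mem_nhds hξ) (fun t ht => hpd2fun t ht)
    have h1 : HasDerivAt (fun t => L (frenetMap g (η, t)))
        (H ((1 + η * signedCurvature g ξ) * (deriv g ξ).1,
            (1 + η * signedCurvature g ξ) * (deriv g ξ).2)) ξ :=
      (hLd P).hasFDerivAt.comp_hasDerivAt ξ (hPη ξ hξ)
    have h2 := h1.clm_apply hV
    rw [h0, heq.deriv_eq]
    exact h2.deriv

  -- first-order values of û at (η,ξ)
  have hval1 : pd1 (u ∘ frenetMap g) (η, ξ) = L P (unitNormal g ξ) := by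
    rw [hpd1fun η, ← hP]
  have hval2 : pd2 (u ∘ frenetMap g) (η, ξ)
      = L P ((1 + η * signedCurvature g ξ) * (deriv g ξ).1,
          (1 + η * signedCurvature g ξ) * (deriv g ξ).2) := by
    rw [hpd2fun ξ hξ, ← hP]
  have hnpair : unitNormal g ξ
      = ((deriv g ξ).2 / speed g ξ, -((deriv g ξ).1 / speed g ξ)) := rfl
  have hk : signedCurvature g ξ
      = ((deriv g ξ).1 * (deriv (deriv g) ξ).2 - (deriv g ξ).2 * (deriv (deriv g) ξ).1)
        / speed g ξ ^ 3 := rfl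
  have eHnn := clm2_expand H ((deriv g ξ).2 / speed g ξ) (-((deriv g ξ).1 / speed g ξ))
    ((deriv g ξ).2 / speed g ξ) (-((deriv g ξ).1 / speed g ξ))
  have eHVV := clm2_expand H ((1 + η * signedCurvature g ξ) * (deriv g ξ).1)
    ((1 + η * signedCurvature g ξ) * (deriv g ξ).2)
    ((1 + η * signedCurvature g ξ) * (deriv g ξ).1)
    ((1 + η * signedCurvature g ξ) * (deriv g ξ).2)
  have eLn := clm_row_expand (L P) ((deriv g ξ).2 / speed g ξ) (-((deriv g ξ).1 / speed g ξ))
  have eLV := clm_row_expand (L P) ((1 + η * signedCurvature g ξ) * (deriv g ξ).1)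
    ((1 + η * signedCurvature g ξ) * (deriv g ξ).2)
  have eLW := clm_row_expand (L P)
    (η * deriv (signedCurvature g) ξ * (deriv g ξ).1
      + (1 + η * signedCurvature g ξ) * (deriv (deriv g) ξ).1)
    (η * deriv (signedCurvature g) ξ * (deriv g ξ).2
      + (1 + η * signedCurvature g ξ) * (deriv (deriv g) ξ).2)
  rw [hLHS1, hLHS2, hRHS1, hRHS2, hval1, hval2, hnpair, eHnn, eHVV, eLn, eLV, eLW]
  have hq := hqeq ξ hξ
  have hs0 : speed g ξ ≠ 0 := (hspos ξ hξ).ne'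
  rw [hk] at hψ ⊢
  set x1 := (deriv g ξ).1
  set y1 := (deriv g ξ).2
  set x2 := (deriv (deriv g) ξ).1
  set y2 := (deriv (deriv g) ξ).2
  set k' := deriv (signedCurvature g) ξ
  set s := speed g ξ
  set h11 := H (1, 0) (1, 0)
  set h12 := H (1, 0) (0, 1)
  set h21 := H (0, 1) (1, 0)
  set h22 := H (0, 1) (0, 1)
  set l1 := L P (1, 0)
  set l2 := L P (0, 1)
  have hc : s ^ 3 + η * (x1 * y2 - y1 * x2) ≠ 0 := by
    intro h
    apply hψ
    field_simp
    linarith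
  field_simp
  linear_combination (s^6*h11 + s^6*h22 - s^4*x2*l1 - s^4*y2*l2 + 2*s^3*η*x1*y2*h11 + 2*s^3*η*x1*y2*h22 - 2*s^3*η*y1*x2*h11 - 2*s^3*η*y1*x2*h22 - s*η*x1*x2*y2*l1 - s*η*x1*y2^2*l2 + s*η*y1*x2^2*l1 + s*η*y1*x2*y2*l2 + η^2*x1^2*y2^2*h11 + η^2*x1^2*y2^2*h22 - 2*η^2*x1*y1*x2*y2*h11 - 2*η^2*x1*y1*x2*y2*h22 + η^2*y1^2*x2^2*h11 + η^2*y1^2*x2^2*h22) * hq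
end
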